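/- The converse of Proposition 2 fails: there exist a finite alphabet Σ, a plant G (languages L_m(G), L(G) with L̄_m(G) = L(G)), observable event subsets Σ_{o,1}, Σ_{o,2} ⊆ Σ with natural projections P₁, P₂, controllable event subsets Σ_{c,1}, Σ_{c,2} ⊆ Σ, an ambient language C ⊆ L_m(G), and a language K ⊆ C such that K is disjunctively coobservable with respect to G, P₁, P₂, Σ_{c,1}, Σ_{c,2} but K is not C̄-coobservable. -/

import Mathlib

/-! Languages over a finite alphabet `α`: strings are `List α`.
`So1, So2` are the observable event subsets `Σ_{o,1}, Σ_{o,2}`;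
`Sc1, Sc2` are the controllable event subsets `Σ_{c,1}, Σ_{c,2}`. -/

variable {α : Type*}

/-- Prefix closure `L̄` of a language `L`. -/
def pcl (L : Set (List α)) : Set (List α) := {s | ∃ t ∈ L, s <+: t}

/-- Natural projection onto the observable event subset `A`:
keeps events in `A`, erases events not in `A`. -/
noncomputable def natProj (A : Set α) : List α → List α :=
  fun s => s.filter (fun a => @decide (a ∈ A) (Classical.propDecidable _))

/-- `K` is relatively coobservable (`C̄`-coobservable) w.r.t. the plant
(closed behavior `LG`), projections `P₁ = natProj So1`, `P₂ = natProj So2`,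
and controllable event subsets `Sc1`, `Sc2` (Definition 1). -/
def RelCoobs (LG C K : Set (List α)) (So1 So2 Sc1 Sc2 : Set α) : Prop :=
  ∀ s s' s'' : List α,
    natProj So1 s = natProj So1 s' → natProj So2 s = natProj So2 s'' →
    ((∀ σ ∈ Sc1 ∩ Sc2,
        (s' ++ [σ] ∈ pcl K ∧ s ∈ pcl C ∧ s ++ [σ] ∈ LG → s ++ [σ] ∈ pcl K) ∧
        (s'' ++ [σ] ∈ pcl K ∧ s ∈ pcl C ∧ s ++ [σ] ∈ LG → s ++ [σ] ∈ pcl K)) ∧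
     (∀ σ ∈ Sc1 \ Sc2,
        s' ++ [σ] ∈ pcl K ∧ s ∈ pcl C ∧ s ++ [σ] ∈ LG → s ++ [σ] ∈ pcl K) ∧
     (∀ σ ∈ Sc2 \ Sc1,
        s'' ++ [σ] ∈ pcl K ∧ s ∈ pcl C ∧ s ++ [σ] ∈ LG → s ++ [σ] ∈ pcl K))

/-- `K` is disjunctively coobservable w.r.t. `LG`, `P₁`, `P₂`, `Sc1`, `Sc2`. -/
def DisjCoobs (LG K : Set (List α)) (So1 So2 Sc1 Sc2 : Set α) : Prop :=
  ∀ s s' s'' : List α,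
    natProj So1 s = natProj So1 s' → natProj So2 s = natProj So2 s'' →
    ((∀ σ ∈ Sc1 ∩ Sc2,
        s' ++ [σ] ∈ LG \ pcl K ∧ s'' ++ [σ] ∈ LG \ pcl K ∧
          s ∈ pcl K ∧ s ++ [σ] ∈ LG → s ++ [σ] ∈ LG \ pcl K) ∧
     (∀ σ ∈ Sc1 \ Sc2,
        s' ++ [σ] ∈ LG \ pcl K ∧ s ∈ pcl K ∧ s ++ [σ] ∈ LG → s ++ [σ] ∈ LG \ pcl K) ∧
     (∀ σ ∈ Sc2 \ Sc1,
        s'' ++ [σ] ∈ LG \ pcl K ∧ s ∈ pcl K ∧ s ++ [σ] ∈ LG → s ++ [σ] ∈ LG \ pcl K))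

lemma natProj_notmem' {A : Set α} {a : α} (h : a ∉ A) (s : List α) :
    natProj A (a :: s) = natProj A s := by
  have hd : @decide (a ∈ A) (Classical.propDecidable _) = false :=
    @decide_eq_false _ (Classical.propDecidable _) h
  simp [natProj, List.filter_cons, hd]

lemma natProj_mem' {A : Set α} {a : α} (h : a ∈ A) (s : List α) :
    natProj A (a :: s) = a :: natProj A s := by
  have hd : @decide (a ∈ A) (Classical.propDecidable _) = true :=
    @decide_eq_true _ (Classical.propDecidable _) h
  simp [natProj, List.filter_cons, hd]

lemma natProj_empty' (s : List α) : natProj (∅ : Set α) s = [] := by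
  induction s with
  | nil => rfl
  | cons a l ih => rw [natProj_notmem' (Set.notMem_empty a), ih]

lemma prefix_single' {a : α} {s : List α} (h : s <+: [a]) : s = [] ∨ s = [a] := by
  rcases h with ⟨u, hu⟩
  cases s with
  | nil => left; rfl
  | cons b l =>
    right
    cases l with
    | nil => simp_all
    | cons c l' => simp at hu

lemma prefix_pair' {a b : α} {s : List α} (h : s <+: [a, b]) :
    s = [] ∨ s = [a] ∨ s = [a, b] := by
  rcases h with ⟨u, hu⟩
  cases s with
  | nil => left; rfl
  | cons x l =>
    cases l with
    | nil => right; left; simp_all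
    | cons y l' =>
      cases l' with
      | nil => right; right; simp_all
      | cons z l'' => simp at hu

/-- the converse of Proposition 2 fails: some disjunctively
coobservable language is not relatively coobservable. -/
theorem disjCoobs_not_implies_relCoobs :
    ∃ (E : Type) (_ : Fintype E) (LmG LG : Set (List E))
      (So1 So2 Sc1 Sc2 : Set E) (C K : Set (List E)),
      pcl LmG = LG ∧ C ⊆ LmG ∧ K ⊆ C ∧
      DisjCoobs LG K So1 So2 Sc1 Sc2 ∧
      ¬ RelCoobs LG C K So1 So2 Sc1 Sc2 := by
  classical
  -- alphabet Bool; event `true` is the controllable event `a`, `false` is `b`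
  refine ⟨Bool, inferInstance,
    {[true], [false], [false, true]}, pcl {[true], [false], [false, true]},
    (∅ : Set Bool), {false}, {true}, {true},
    {[true], [false]}, {[true]}, rfl, ?_, ?_, ?_, ?_⟩
  · intro s hs
    simp only [Set.mem_insert_iff, Set.mem_singleton_iff] at hs ⊢; tauto
  · intro s hs
    simp only [Set.mem_insert_iff, Set.mem_singleton_iff] at hs ⊢; tauto
  · -- DisjCoobs
    intro s s' s'' h1 h2
    refine ⟨?_, ?_, ?_⟩
    · intro σ hσ
      simp only [Set.mem_inter_iff, Set.mem_singleton_iff] at hσ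
      obtain ⟨rfl, -⟩ := hσ
      rintro ⟨-, ⟨hs''L, hs''K⟩, hK, -⟩
      exfalso
      -- from s ∈ pcl K, s = [] or s = [true], hence natProj {false} s = []
      obtain ⟨t, ht, hpre⟩ := hK
      simp only [Set.mem_singleton_iff] at ht; subst ht
      have hs0 : natProj ({false} : Set Bool) s = [] := by
        rcases prefix_single' hpre with rfl | rfl
        · rfl
        · exact natProj_notmem' (by simp : (true : Bool) ∉ ({false} : Set Bool)) []
      -- from s'' ++ [true] ∈ LG \ pcl K, s'' = [false]
      obtain ⟨t, ht, hpre2⟩ := hs''L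
      have hs'' : s'' = [false] := by
        simp only [Set.mem_insert_iff, Set.mem_singleton_iff] at ht
        rcases ht with rfl | rfl | rfl
        · rcases prefix_single' hpre2 with h | h
          · simp at h
          · exfalso; apply hs''K
            refine ⟨[true], by simp, ?_⟩
            have : s'' = [] := by
              cases s'' with
              | nil => rfl
              | cons x l => exfalso; cases l <;> simp_all
            simp [this]
        · rcases prefix_single' hpre2 with h | h
          · simp at h
          · exfalso; cases s'' <;> simp_all
        · rcases prefix_pair' hpre2 with h | h | h
          · simp at h
          · exfalso; cases s'' <;> simp_all
          · cases s'' with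
            | nil => simp at h
            | cons x l =>
              cases l with
              | nil => simp_all
              | cons y l' => exfalso; cases l' <;> simp_all
      rw [hs''] at h2
      rw [hs0, natProj_mem' (by simp : (false : Bool) ∈ ({false} : Set Bool)) []] at h2
      simp at h2
    · intro σ hσ; simp at hσ
    · intro σ hσ; simp at hσ
  · -- ¬ RelCoobs
    intro h
    have h1 : natProj (∅ : Set Bool) [false] = natProj (∅ : Set Bool) [] := by
      simp [natProj_empty']
    obtain ⟨hi, -, -⟩ := h [false] [] [false] h1 rfl
    have := (hi true (by simp)).1
      ⟨⟨[true], by simp, by simp⟩,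
       ⟨[false], by simp, by simp⟩,
       ⟨[false, true], by simp, by simp⟩⟩
    obtain ⟨t, ht, hpre⟩ := this
    simp only [Set.mem_singleton_iff] at ht; subst ht
    rcases prefix_single' hpre with h' | h' <;> simp at h'
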